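/- arXiv:1201.2457 — 4 statements merged into one kernel-verified Lean document; each statement's English description precedes it below -/
import Mathlib

section
/- In the formal power series ring (ℚ(v)[x_1,…,x_m])⟦t⟧, the following identity holds: ∏_{i=1}^m (1 − x_i t)(1 + v x_i t)(1 + x_i t)^{−1}(1 − v x_i t)^{−1} = Σ_{α ∈ ℕ^m} (v−1)^{ℓ(α)} Δ_α · x_1^{α_1}⋯x_m^{α_m} · t^{α_1+⋯+α_m}, where the factors (1 + x_i t) and (1 − v x_i t) are invertible power series. -/
noncomputable section

open PowerSeries

/-- The field `ℚ(v)` of rational functions in the indeterminate `v`. -/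
abbrev Fv : Type := RatFunc ℚ

/-- The indeterminate `v`. -/
def vv : Fv := RatFunc.X

/-- `Δ_0 = 1` and `Δ_s = 2(v^s - (-1)^s)/(v+1)` for `s ≥ 1`. -/
def ΔQ (s : ℕ) : Fv := if s = 0 then 1 else 2 * (vv ^ s - (-1 : Fv) ^ s) / (vv + 1)

/-- The polynomial ring `ℚ(v)[x_1, …, x_m]`. -/
abbrev Rm (m : ℕ) : Type := MvPolynomial (Fin m) Fv

/-- `ℓ(α)`: the number of nonzero entries of a tuple `α ∈ ℕ^m`. -/
def lenα {m : ℕ} (α : Fin m → ℕ) : ℕ := (Finset.univ.filter (fun i => α i ≠ 0)).card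

/-- `Δ_α = Δ_{α_1} ⋯ Δ_{α_m}`. -/
def Δα {m : ℕ} (α : Fin m → ℕ) : Fv := ∏ i, ΔQ (α i)

/-- The left-hand side: `∏_{i=1}^m (1 - x_i t)(1 + v x_i t)(1 + x_i t)⁻¹(1 - v x_i t)⁻¹`
as a formal power series in `t` over `ℚ(v)[x_1, …, x_m]`; the inverses are taken via
`Ring.inverse`, which gives the genuine inverse since these factors are units. -/
def lhs (m : ℕ) : PowerSeries (Rm m) :=
  ∏ i : Fin m,
    ((1 - PowerSeries.C (R := Rm m) (MvPolynomial.X i) * PowerSeries.X) *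
      (1 + PowerSeries.C (R := Rm m) (MvPolynomial.C vv * MvPolynomial.X i) * PowerSeries.X) *
      Ring.inverse (1 + PowerSeries.C (R := Rm m) (MvPolynomial.X i) * PowerSeries.X) *
      Ring.inverse
        (1 - PowerSeries.C (R := Rm m) (MvPolynomial.C vv * MvPolynomial.X i) * PowerSeries.X))

/-! ### Auxiliary material -/

lemma hv1 : (vv + 1 : Fv) ≠ 0 := by
  have : (vv + 1 : Fv) = algebraMap (Polynomial ℚ) Fv (Polynomial.X + 1) := by
    simp [vv, RatFunc.algebraMap_X]
  rw [this]
  apply RatFunc.algebraMap_ne_zero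
  intro h
  have := congrArg (fun p => Polynomial.coeff p 1) h
  simp [Polynomial.coeff_one] at this

/-- Geometric series: `(∑ aⁿ Xⁿ) (1 - aX) = 1`. -/
lemma geom {R : Type*} [CommRing R] (a : R) :
    (PowerSeries.mk fun n => a ^ n) * (1 - PowerSeries.C (R := R) a * PowerSeries.X) = 1 := by
  have h := congrArg (rescale a) (PowerSeries.mk_one_mul_one_sub_eq_one (S := R))
  have hX : rescale a (PowerSeries.X : PowerSeries R) = PowerSeries.C (R := R) a * PowerSeries.X := by
    ext n
    simp only [coeff_rescale, PowerSeries.coeff_X, PowerSeries.coeff_C_mul]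
    rcases eq_or_ne n 1 with rfl | hn
    · simp
    · simp [hn]
  simp only [map_mul, map_sub, map_one, hX, rescale_mk] at h
  simpa using h

def AQ : Fv := 2 * (1 - vv) / (vv + 1)
def BQ : Fv := 2 * (vv - 1) / (vv + 1)
def εQ (s : ℕ) : Fv := if s = 0 then 1 else (vv - 1) * ΔQ s

lemma hAB : AQ + BQ = 0 := by
  unfold AQ BQ
  rw [← add_div]
  have : 2 * (1 - vv) + 2 * (vv - 1) = 0 := by ring
  rw [this, zero_div]

lemma hB2 : BQ * (vv + 1) = 2 * (vv - 1) := by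
  unfold BQ
  rw [div_mul_cancel₀ _ hv1]

lemma εQ_zero : εQ 0 = 1 := rfl

lemma εQ_eq (n : ℕ) (hn : n ≠ 0) : εQ n = AQ * (-1) ^ n + BQ * vv ^ n := by
  unfold εQ ΔQ AQ BQ
  rw [if_neg hn, if_neg hn]
  field_simp
  ring

/-- The factor series. -/
def Efac (m : ℕ) (i : Fin m) : PowerSeries (Rm m) :=
  PowerSeries.mk fun n => MvPolynomial.C (εQ n) * (MvPolynomial.X i) ^ n

lemma Efac_eq (m : ℕ) (i : Fin m) :
    Efac m i =
      1 + PowerSeries.C (R := Rm m) (MvPolynomial.C AQ) *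
            (PowerSeries.mk fun n => (-(MvPolynomial.X i : Rm m)) ^ n) +
          PowerSeries.C (R := Rm m) (MvPolynomial.C BQ) *
            (PowerSeries.mk fun n => (MvPolynomial.C vv * MvPolynomial.X i : Rm m) ^ n) := by
  ext n : 1
  simp only [Efac, map_add, PowerSeries.coeff_mk, PowerSeries.coeff_one,
    PowerSeries.coeff_C_mul]
  rcases eq_or_ne n 0 with rfl | hn
  · simp only [pow_zero, if_pos rfl, mul_one, εQ_zero, map_one]
    have h := congrArg (MvPolynomial.C (σ := Fin m)) hAB
    rw [map_add, map_zero] at h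
    simp only [if_true]
    linear_combination -h
  · rw [εQ_eq n hn, if_neg hn]
    simp only [map_add, map_mul, map_pow, map_neg, map_one]
    ring

lemma isUnit_one_add (m : ℕ) (c : Rm m) :
    IsUnit (1 + PowerSeries.C (R := Rm m) c * PowerSeries.X) := by
  rw [PowerSeries.isUnit_iff_constantCoeff]
  simp

lemma isUnit_one_sub (m : ℕ) (c : Rm m) :
    IsUnit (1 - PowerSeries.C (R := Rm m) c * PowerSeries.X) := by
  rw [PowerSeries.isUnit_iff_constantCoeff]
  simp

lemma Efac_mul (m : ℕ) (i : Fin m) :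
    Efac m i *
        ((1 + PowerSeries.C (R := Rm m) (MvPolynomial.X i) * PowerSeries.X) *
          (1 - PowerSeries.C (R := Rm m) (MvPolynomial.C vv * MvPolynomial.X i) * PowerSeries.X)) =
      (1 - PowerSeries.C (R := Rm m) (MvPolynomial.X i) * PowerSeries.X) *
        (1 + PowerSeries.C (R := Rm m) (MvPolynomial.C vv * MvPolynomial.X i) * PowerSeries.X) := by
  set sa : PowerSeries (Rm m) := PowerSeries.C (R := Rm m) (MvPolynomial.X i) with hsa
  set sv : PowerSeries (Rm m) := PowerSeries.C (R := Rm m) (MvPolynomial.C vv) with hsv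
  have hg1 : (PowerSeries.mk fun n => (-(MvPolynomial.X i : Rm m)) ^ n) *
      (1 + sa * PowerSeries.X) = 1 := by
    have := geom (-(MvPolynomial.X i : Rm m))
    rw [map_neg] at this
    simpa [sub_neg_eq_add, hsa] using this
  have hg2 : (PowerSeries.mk fun n => (MvPolynomial.C vv * MvPolynomial.X i : Rm m) ^ n) *
      (1 - sv * sa * PowerSeries.X) = 1 := by
    have := geom (MvPolynomial.C vv * MvPolynomial.X i : Rm m)
    rw [map_mul] at this
    simpa [hsa, hsv] using this
  have hAB' : PowerSeries.C (R := Rm m) (MvPolynomial.C AQ) +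
      PowerSeries.C (R := Rm m) (MvPolynomial.C BQ) = 0 := by
    rw [← map_add, ← map_add, hAB, map_zero, map_zero]
  have hB2' : PowerSeries.C (R := Rm m) (MvPolynomial.C BQ) * (sv + 1) = 2 * (sv - 1) := by
    have h := congrArg (fun x : Fv =>
      PowerSeries.C (R := Rm m) (MvPolynomial.C x)) hB2
    simpa [hsv, map_mul, map_add, map_sub, map_one, map_ofNat, mul_comm] using h
  rw [Efac_eq]
  have hb : PowerSeries.C (R := Rm m) (MvPolynomial.C vv * MvPolynomial.X i) = sv * sa := by
    rw [map_mul]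
  rw [hb]
  linear_combination (PowerSeries.C (R := Rm m) (MvPolynomial.C AQ) * (1 - sv * sa * PowerSeries.X)) * hg1 +
    (PowerSeries.C (R := Rm m) (MvPolynomial.C BQ) * (1 + sa * PowerSeries.X)) * hg2 +
    (1 - sv * sa * PowerSeries.X) * hAB' + (sa * PowerSeries.X) * hB2'

lemma lhs_eq (m : ℕ) : lhs m = ∏ i : Fin m, Efac m i := by
  unfold lhs
  refine Finset.prod_congr rfl fun i _ => ?_
  have hu1 := isUnit_one_add m (MvPolynomial.X i)
  have hu2 := isUnit_one_sub m (MvPolynomial.C vv * MvPolynomial.X i)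
  have hP : IsUnit ((1 + PowerSeries.C (R := Rm m) (MvPolynomial.X i) * PowerSeries.X) *
      (1 - PowerSeries.C (R := Rm m) (MvPolynomial.C vv * MvPolynomial.X i) * PowerSeries.X)) :=
    hu1.mul hu2
  apply hP.mul_left_cancel
  have h1 : Ring.inverse (1 + PowerSeries.C (R := Rm m) (MvPolynomial.X i) * PowerSeries.X) *
      (1 + PowerSeries.C (R := Rm m) (MvPolynomial.X i) * PowerSeries.X) = 1 :=
    Ring.inverse_mul_cancel _ hu1
  have h2 : Ring.inverse
        (1 - PowerSeries.C (R := Rm m) (MvPolynomial.C vv * MvPolynomial.X i) * PowerSeries.X) *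
      (1 - PowerSeries.C (R := Rm m) (MvPolynomial.C vv * MvPolynomial.X i) * PowerSeries.X) = 1 :=
    Ring.inverse_mul_cancel _ hu2
  have h3 := Efac_mul m i
  calc _ = ((1 - PowerSeries.C (R := Rm m) (MvPolynomial.X i) * PowerSeries.X) *
        (1 + PowerSeries.C (R := Rm m) (MvPolynomial.C vv * MvPolynomial.X i) * PowerSeries.X)) *
        ((Ring.inverse (1 + PowerSeries.C (R := Rm m) (MvPolynomial.X i) * PowerSeries.X) *
          (1 + PowerSeries.C (R := Rm m) (MvPolynomial.X i) * PowerSeries.X)) *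
         (Ring.inverse (1 - PowerSeries.C (R := Rm m) (MvPolynomial.C vv * MvPolynomial.X i) * PowerSeries.X) *
          (1 - PowerSeries.C (R := Rm m) (MvPolynomial.C vv * MvPolynomial.X i) * PowerSeries.X))) := by
          ring
    _ = (1 - PowerSeries.C (R := Rm m) (MvPolynomial.X i) * PowerSeries.X) *
        (1 + PowerSeries.C (R := Rm m) (MvPolynomial.C vv * MvPolynomial.X i) * PowerSeries.X) := by
          rw [h1, h2]; ring
    _ = _ := by rw [← h3]; ring

lemma prod_εQ {m : ℕ} (α : Fin m → ℕ) :
    ∏ i, εQ (α i) = (vv - 1) ^ lenα α * Δα α := by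
  have h1 : ∀ s : ℕ, εQ s = (if s ≠ 0 then vv - 1 else 1) * ΔQ s := by
    intro s
    rcases eq_or_ne s 0 with rfl | hs
    · simp [εQ_zero, ΔQ]
    · simp [εQ, ΔQ, hs]
  calc (∏ i, εQ (α i)) = ∏ i, (if α i ≠ 0 then vv - 1 else 1) * ΔQ (α i) := by
        exact Finset.prod_congr rfl fun i _ => h1 (α i)
    _ = (∏ i, if α i ≠ 0 then vv - 1 else 1) * ∏ i, ΔQ (α i) := Finset.prod_mul_distrib
    _ = (vv - 1) ^ lenα α * Δα α := by
        rw [← Finset.prod_filter, Finset.prod_const]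
        rfl

/-- In `(ℚ(v)[x_1,…,x_m])⟦t⟧` one has
`∏_i (1-x_i t)(1+v x_i t)(1+x_i t)⁻¹(1-v x_i t)⁻¹
  = Σ_{α ∈ ℕ^m} (v-1)^{ℓ(α)} Δ_α x^α t^{|α|}`,
stated coefficientwise in `t`: for every `d`, the `t^d`-coefficient of the left-hand side
equals the (finite) sum over all `α ∈ ℕ^m` with `|α| = d` (such `α` have all entries `≤ d`,
so they are enumerated by `Fin m → Fin (d+1)`). -/
theorem statement_2 (m d : ℕ) :
    PowerSeries.coeff (R := Rm m) d (lhs m) =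
      ∑ g : Fin m → Fin (d + 1),
        if (∑ i, ((g i : ℕ))) = d then
          MvPolynomial.C ((vv - 1) ^ lenα (fun i => (g i : ℕ)) * Δα (fun i => (g i : ℕ))) *
            ∏ i, (MvPolynomial.X i : Rm m) ^ ((g i : ℕ))
        else 0 := by
  rw [lhs_eq, PowerSeries.coeff_prod]
  rw [← Finset.sum_filter]
  refine Finset.sum_nbij' (fun l => fun j => (⟨min (l j) d, by omega⟩ : Fin (d + 1)))
    (fun g => Finsupp.equivFunOnFinite.symm (fun j => (g j : ℕ))) ?_ ?_ ?_ ?_ ?_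
  · intro l hl
    rw [Finset.mem_finsuppAntidiag] at hl
    have hle : ∀ j, l j ≤ d := by
      intro j
      rw [← hl.1]
      exact Finset.single_le_sum (fun i _ => Nat.zero_le _) (Finset.mem_univ j)
    simp only [Finset.mem_filter, Finset.mem_univ, true_and]
    calc (∑ i, ((⟨min (l i) d, by omega⟩ : Fin (d+1)) : ℕ)) = ∑ i, l i := by
          exact Finset.sum_congr rfl fun i _ => by simp [min_eq_left (hle i)]
      _ = d := hl.1
  · intro g hg
    rw [Finset.mem_finsuppAntidiag]
    simp only [Finset.mem_filter, Finset.mem_univ, true_and] at hg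
    constructor
    · simpa [Finsupp.coe_equivFunOnFinite_symm] using hg
    · exact fun j _ => Finset.mem_univ j
  · intro l hl
    rw [Finset.mem_finsuppAntidiag] at hl
    have hle : ∀ j, l j ≤ d := by
      intro j
      rw [← hl.1]
      exact Finset.single_le_sum (fun i _ => Nat.zero_le _) (Finset.mem_univ j)
    ext j
    simp [Finsupp.coe_equivFunOnFinite_symm, min_eq_left (hle j)]
  · intro g hg
    funext j
    ext
    simp only [Finsupp.coe_equivFunOnFinite_symm]
    simpa using Nat.lt_succ_iff.mp (g j).isLt
  · intro l hl
    rw [Finset.mem_finsuppAntidiag] at hl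
    have hle : ∀ j, l j ≤ d := by
      intro j
      rw [← hl.1]
      exact Finset.single_le_sum (fun i _ => Nat.zero_le _) (Finset.mem_univ j)
    have hmin : ∀ j, min (l j) d = l j := fun j => min_eq_left (hle j)
    simp only [Efac, PowerSeries.coeff_mk]
    simp only [hmin]
    rw [Finset.prod_mul_distrib, ← map_prod, prod_εQ]

end
end

section
/- Set x_n := T_1 T_2 ⋯ T_{n−1} and T_i′ := T_i − v + 1 in HC_n. Then: (1) x_n c_i = c_{i+1} x_n for all 1 ≤ i ≤ n−1; (2) x_n c_n = c_1 T_1′ T_2′ ⋯ T_{n−1}′ + (v−1)·( c_2 T_{w_{(1)}} T_2′ ⋯ T_{n−1}′ + c_3 T_{w_{(2)}} T_3′ ⋯ T_{n−1}′ + ⋯ + c_{n−1} T_{w_{(n−2)}} T_{n−1}′ + c_n T_{w_{(n−1)}} ), where T_{w_{(k)}} := T_1 T_2 ⋯ T_{k−1} (and T_{w_{(1)}} = 1). -/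
noncomputable section

/-- The ring `ℤ[1/2]`. -/
abbrev Zh : Type := Localization.Away (2 : ℤ)

/-- The ring `A = ℤ[1/2][v, v⁻¹]` of Laurent polynomials over `ℤ[1/2]`. -/
def Av : Type := LaurentPolynomial Zh

noncomputable instance : CommRing Av := inferInstanceAs (CommRing (LaurentPolynomial Zh))

/-- The indeterminate `v ∈ A`. -/
def vA : Av := (LaurentPolynomial.T 1 : LaurentPolynomial Zh)

/-- Generators of the Hecke–Clifford algebra: `T i` (0-based, for `T_{i+1}` of the paper,
`i = 0, …, n-2`) and `c j` (0-based, for `c_{j+1}`, `j = 0, …, n-1`). -/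
inductive HCgen (n : ℕ) : Type
  | T : Fin (n - 1) → HCgen n
  | c : Fin n → HCgen n

/-- For a `T`-index `i`, the `c`-index of the first strand that `T_i` involves. -/
def lo {n : ℕ} (i : Fin (n - 1)) : Fin n := ⟨i.1, by have := i.2; omega⟩

/-- For a `T`-index `i`, the `c`-index of the second strand that `T_i` involves. -/
def hi {n : ℕ} (i : Fin (n - 1)) : Fin n := ⟨i.1 + 1, by have := i.2; omega⟩

/-- The defining relations of the Hecke–Clifford algebra. -/
inductive HCrel (n : ℕ) : FreeAlgebra Av (HCgen n) → FreeAlgebra Av (HCgen n) → Prop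
  | quad (i : Fin (n - 1)) :
      HCrel n ((FreeAlgebra.ι Av (HCgen.T i) - algebraMap Av (FreeAlgebra Av (HCgen n)) vA) *
        (FreeAlgebra.ι Av (HCgen.T i) + 1)) 0
  | Tcomm (i j : Fin (n - 1)) (h : i.1 + 1 < j.1) :
      HCrel n (FreeAlgebra.ι Av (HCgen.T i) * FreeAlgebra.ι Av (HCgen.T j))
        (FreeAlgebra.ι Av (HCgen.T j) * FreeAlgebra.ι Av (HCgen.T i))
  | braid (i j : Fin (n - 1)) (h : i.1 + 1 = j.1) :
      HCrel n (FreeAlgebra.ι Av (HCgen.T i) * FreeAlgebra.ι Av (HCgen.T j) *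
          FreeAlgebra.ι Av (HCgen.T i))
        (FreeAlgebra.ι Av (HCgen.T j) * FreeAlgebra.ι Av (HCgen.T i) *
          FreeAlgebra.ι Av (HCgen.T j))
  | csq (i : Fin n) :
      HCrel n (FreeAlgebra.ι Av (HCgen.c i) * FreeAlgebra.ι Av (HCgen.c i)) 1
  | canti (i j : Fin n) (h : i ≠ j) :
      HCrel n (FreeAlgebra.ι Av (HCgen.c i) * FreeAlgebra.ι Av (HCgen.c j))
        (-(FreeAlgebra.ι Av (HCgen.c j) * FreeAlgebra.ι Av (HCgen.c i)))
  | Tccomm (i : Fin (n - 1)) (j : Fin n) (h1 : j ≠ lo i) (h2 : j ≠ hi i) :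
      HCrel n (FreeAlgebra.ι Av (HCgen.T i) * FreeAlgebra.ι Av (HCgen.c j))
        (FreeAlgebra.ι Av (HCgen.c j) * FreeAlgebra.ι Av (HCgen.T i))
  | Tc (i : Fin (n - 1)) :
      HCrel n (FreeAlgebra.ι Av (HCgen.T i) * FreeAlgebra.ι Av (HCgen.c (lo i)))
        (FreeAlgebra.ι Av (HCgen.c (hi i)) * FreeAlgebra.ι Av (HCgen.T i))

/-- The Hecke–Clifford algebra `HC_n` over `A`. -/
abbrev HC (n : ℕ) : Type := RingQuot (HCrel n)

/-- The generator `T_i` of `HC_n` (`0`-based index). -/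
def Tg {n : ℕ} (i : Fin (n - 1)) : HC n :=
  RingQuot.mkAlgHom Av (HCrel n) (FreeAlgebra.ι Av (HCgen.T i))

/-- The generator `c_j` of `HC_n` (`0`-based index). -/
def cg {n : ℕ} (j : Fin n) : HC n :=
  RingQuot.mkAlgHom Av (HCrel n) (FreeAlgebra.ι Av (HCgen.c j))

/-- `T_{i_1} ⋯ T_{i_k}` for a word `L = [i_1, …, i_k]`. -/
def Tw {n : ℕ} (L : List (Fin (n - 1))) : HC n := (L.map Tg).prod

/-- `C_I = c_{i_1} ⋯ c_{i_k}` for a subset `I = {i_1 < ⋯ < i_k}`. -/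
def Cset {n : ℕ} (I : Finset (Fin n)) : HC n := ((I.sort (· ≤ ·)).map cg).prod

/-- The `A`-submodule `[HC_n, HC_n]` spanned by all commutators. -/
def commSpan (n : ℕ) : Submodule Av (HC n) :=
  Submodule.span Av {x : HC n | ∃ a b : HC n, x = a * b - b * a}

/-- The simple transposition `s_i = (i+1, i+2)` (paper numbering) in `S_n`. -/
def sgen {n : ℕ} (i : Fin (n - 1)) : Equiv.Perm (Fin n) := Equiv.swap (lo i) (hi i)

/-- The product of the simple transpositions along a word. -/
def wordProd {n : ℕ} (L : List (Fin (n - 1))) : Equiv.Perm (Fin n) := (L.map sgen).prod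

/-- The Coxeter length of a permutation: the minimal length of a word in the simple
transpositions expressing it. -/
def plen {n : ℕ} (σ : Equiv.Perm (Fin n)) : ℕ :=
  sInf {k | ∃ L : List (Fin (n - 1)), wordProd L = σ ∧ L.length = k}

/-- `L` is a reduced expression of `σ`. -/
def IsReducedWord {n : ℕ} (σ : Equiv.Perm (Fin n)) (L : List (Fin (n - 1))) : Prop :=
  wordProd L = σ ∧ L.length = plen σ

/-- The canonical reduced word of the permutation `w_γ` attached to a composition `γ` of `n`:
the increasing list of all `0`-based `T`-indices `i ∈ {0, …, n-2}` such that `i+1` is not a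
partial sum of `γ`. -/
def compWord {n : ℕ} (γ : Composition n) : List (Fin (n - 1)) :=
  (List.finRange (n - 1)).filter (fun i => i.1 + 1 ∉ γ.blocks.scanl (· + ·) 0)

/-- The element `T_{w_γ}` of `HC_n` for a composition `γ` of `n`. -/
def Twγ {n : ℕ} (γ : Composition n) : HC n := Tw (compWord γ)

/-- The permutation `w_γ` attached to a composition `γ` of `n`. -/
def wγ {n : ℕ} (γ : Composition n) : Equiv.Perm (Fin n) := wordProd (compWord γ)

/-- A composition is a partition if its parts are weakly decreasing. -/
def IsPartitionC {n : ℕ} (γ : Composition n) : Prop := γ.blocks.Pairwise (· ≥ ·)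

/-- An odd partition: a partition all of whose parts are odd. -/
def IsOddPartitionC {n : ℕ} (γ : Composition n) : Prop :=
  IsPartitionC γ ∧ ∀ p ∈ γ.blocks, Odd p

instance {n : ℕ} (γ : Composition n) : Decidable (IsOddPartitionC γ) := by
  unfold IsOddPartitionC IsPartitionC
  infer_instance

/-- A trace function on `HC_n`: an `A`-linear map that is symmetric on products and vanishes
on the odd part, i.e. on all elements `T_σ C_I` with `|I|` odd (with `T_σ` given by any
reduced expression of `σ`). -/
def IsTraceFun {n : ℕ} (φ : HC n →ₗ[Av] Av) : Prop :=
  (∀ a b : HC n, φ (a * b) = φ (b * a)) ∧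
  ∀ L : List (Fin (n - 1)), IsReducedWord (wordProd L) L →
    ∀ I : Finset (Fin n), Odd I.card → φ (Tw L * Cset I) = 0

/-- The element `(v - 1)/2 ∈ A`. -/
def halfvm1 : Av := Ring.inverse (2 : Av) * (vA - 1)


-- auxiliary lemmas
section Aux

variable {n : ℕ}

local notation "v'" => algebraMap Av (HC n) vA

/-- `v⁻¹ ∈ A`. -/
def uA : Av := (LaurentPolynomial.T (-1) : LaurentPolynomial Zh)

lemma uA_mul_vA : uA * vA = 1 := by
  have h : (LaurentPolynomial.T (-1) : LaurentPolynomial Zh) * LaurentPolynomial.T 1 = 1 := by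
    rw [← LaurentPolynomial.T_add]
    norm_num
  exact h

lemma hc_rel {x y : FreeAlgebra Av (HCgen n)} (h : HCrel n x y) :
    RingQuot.mkAlgHom Av (HCrel n) x = RingQuot.mkAlgHom Av (HCrel n) y :=
  RingQuot.mkAlgHom_rel Av h

lemma Tc_rel (i : Fin (n - 1)) : Tg i * cg (lo i) = cg (hi i) * Tg i := by
  simpa only [map_mul, Tg, cg] using hc_rel (HCrel.Tc i)

lemma Tccomm_rel (i : Fin (n - 1)) (j : Fin n) (h1 : j ≠ lo i) (h2 : j ≠ hi i) :
    Tg i * cg j = cg j * Tg i := by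
  simpa only [map_mul, Tg, cg] using hc_rel (HCrel.Tccomm i j h1 h2)

lemma quad_rel (i : Fin (n - 1)) : (Tg i - v') * (Tg i + 1) = 0 := by
  simpa only [map_mul, map_sub, map_add, map_one, map_zero, AlgHom.commutes, Tg]
    using hc_rel (HCrel.quad i)

lemma T_mul_tp (i : Fin (n - 1)) : Tg i * (Tg i - v' + 1) = v' := by
  have h := quad_rel i
  have hc : Tg i * v' = v' * Tg i := (Algebra.commutes _ _).symm
  calc Tg i * (Tg i - v' + 1)
      = (Tg i - v') * (Tg i + 1) + (v' * Tg i - Tg i * v') + v' := by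
        noncomm_ring
        simp only [mul_smul_comm, smul_mul_assoc]
        abel
    _ = v' := by rw [h, hc]; noncomm_ring

lemma TT_rel (i : Fin (n - 1)) : Tg i * Tg i = (v' - 1) * Tg i + v' := by
  have h := T_mul_tp i
  have hc : Tg i * v' = v' * Tg i := (Algebra.commutes _ _).symm
  calc Tg i * Tg i = Tg i * (Tg i - v' + 1) + Tg i * v' - Tg i := by
        noncomm_ring
        simp only [mul_smul_comm, smul_mul_assoc]
        abel
    _ = (v' - 1) * Tg i + v' := by
        rw [h, hc]
        noncomm_ring
        simp only [smul_mul_assoc, mul_smul_comm, one_mul]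

lemma v_cancel {x y : HC n} (h : v' * x = v' * y) : x = y := by
  have h1 : (algebraMap Av (HC n) uA) * v' = 1 := by
    rw [← map_mul, uA_mul_vA, map_one]
  calc x = (algebraMap Av (HC n) uA) * (v' * x) := by rw [← mul_assoc, h1, one_mul]
    _ = (algebraMap Av (HC n) uA) * (v' * y) := by rw [h]
    _ = y := by rw [← mul_assoc, h1, one_mul]

lemma Tchi (i : Fin (n - 1)) :
    Tg i * cg (hi i) = cg (lo i) * (Tg i - v' + 1) + (v' - 1) * cg (hi i) := by
  set T := Tg i with hT
  set a := cg (lo i)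
  set b := cg (hi i)
  have h2 : T * a = b * T := Tc_rel i
  have h3 : T * (T - v' + 1) = v' := T_mul_tp i
  have hq : T * T = (v' - 1) * T + v' := TT_rel i
  have key : T * b * T = (v' - 1) * (b * T) + v' * a := by
    calc T * b * T = T * (b * T) := by rw [mul_assoc]
      _ = T * (T * a) := by rw [← h2]
      _ = (T * T) * a := by rw [mul_assoc]
      _ = ((v' - 1) * T + v') * a := by rw [hq]
      _ = (v' - 1) * (T * a) + v' * a := by noncomm_ring
      _ = (v' - 1) * (b * T) + v' * a := by rw [h2]
  apply v_cancel
  have hcb : b * v' = v' * b := Algebra.commutes _ _ |>.symm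
  have hcTb : (T * b) * v' = v' * (T * b) := Algebra.commutes _ _ |>.symm
  calc v' * (T * b) = T * b * (T * (T - v' + 1)) := by rw [h3, hcTb]
    _ = (T * b * T) * (T - v' + 1) := by noncomm_ring
    _ = ((v' - 1) * (b * T) + v' * a) * (T - v' + 1) := by rw [key]
    _ = (v' - 1) * (b * (T * (T - v' + 1))) + v' * (a * (T - v' + 1)) := by noncomm_ring
    _ = (v' - 1) * (b * v') + v' * (a * (T - v' + 1)) := by rw [h3]
    _ = v' * (a * (T - v' + 1) + (v' - 1) * b) := by
        rw [hcb]
        noncomm_ring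
        simp only [smul_mul_assoc, mul_smul_comm, one_mul]
        abel

end Aux

section Lists

variable {n : ℕ}

local notation "v'" => algebraMap Av (HC n) vA

lemma Tw_nil : Tw (n := n) [] = 1 := rfl

lemma Tw_cons (i : Fin (n - 1)) (L : List (Fin (n - 1))) :
    Tw (i :: L) = Tg i * Tw L := by
  simp [Tw]

lemma Tw_append (L1 L2 : List (Fin (n - 1))) : Tw (L1 ++ L2) = Tw L1 * Tw L2 := by
  simp [Tw]

lemma Tw_singleton (i : Fin (n - 1)) : Tw [i] = Tg i := by
  simp [Tw]

lemma Tw_comm_cg (L : List (Fin (n - 1))) (j : Fin n)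
    (h : ∀ i ∈ L, j ≠ lo i ∧ j ≠ hi i) : Tw L * cg j = cg j * Tw L := by
  induction L with
  | nil => simp [Tw_nil]
  | cons i L ih =>
      have hi' := h i (by simp)
      rw [Tw_cons, mul_assoc, ih (fun i' hi'' => h i' (by simp [hi''])), ← mul_assoc,
        Tccomm_rel i j hi'.1 hi'.2, mul_assoc]

lemma mem_take_finRange {m k : ℕ} {j : Fin m} (h : j ∈ (List.finRange m).take k) : j.1 < k := by
  obtain ⟨idx, hidx, he⟩ := List.mem_iff_getElem.mp h
  have hj : j.1 = idx := by
    rw [← he]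
    simp [List.getElem_take, List.getElem_finRange]
  simp only [List.length_take, List.length_finRange] at hidx
  omega

lemma mem_drop_finRange {m k : ℕ} {j : Fin m} (h : j ∈ (List.finRange m).drop k) : k ≤ j.1 := by
  obtain ⟨idx, hidx, he⟩ := List.mem_iff_getElem.mp h
  have hj : j.1 = k + idx := by
    rw [← he]
    simp [List.getElem_drop, List.getElem_finRange]
  omega

lemma take_succ_finRange {m k : ℕ} (h : k < m) :
    (List.finRange m).take (k + 1) = (List.finRange m).take k ++ [⟨k, h⟩] := by
  rw [← List.take_concat_get (l := List.finRange m) (i := k) (by simp [h]), List.concat_eq_append]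
  congr
  simp [List.getElem_finRange, Fin.ext_iff]

/-- Part 1 of the statement. -/
lemma part1 (i : Fin (n - 1)) :
    Tw (List.finRange (n - 1)) * cg (lo i) = cg (hi i) * Tw (List.finRange (n - 1)) := by
  set L := List.finRange (n - 1) with hL
  have hsplit : Tw L = Tw (L.take i.1) * Tg i * Tw (L.drop (i.1 + 1)) := by
    conv_lhs => rw [← List.take_append_drop (i.1 + 1) L]
    rw [Tw_append, take_succ_finRange i.2, Tw_append, Tw_singleton]
  have hdrop : Tw (L.drop (i.1 + 1)) * cg (lo i) = cg (lo i) * Tw (L.drop (i.1 + 1)) := by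
    apply Tw_comm_cg
    intro j hj
    have := mem_drop_finRange (hL ▸ hj)
    constructor <;> · simp only [lo, hi, Fin.ext_iff, ne_eq]; omega
  have htake : Tw (L.take i.1) * cg (hi i) = cg (hi i) * Tw (L.take i.1) := by
    apply Tw_comm_cg
    intro j hj
    have := mem_take_finRange (hL ▸ hj)
    constructor <;> · simp only [lo, hi, Fin.ext_iff, ne_eq]; omega
  calc Tw L * cg (lo i)
      = Tw (L.take i.1) * Tg i * (Tw (L.drop (i.1 + 1)) * cg (lo i)) := by
        rw [hsplit]; noncomm_ring
    _ = Tw (L.take i.1) * (Tg i * cg (lo i)) * Tw (L.drop (i.1 + 1)) := by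
        rw [hdrop]; noncomm_ring
    _ = Tw (L.take i.1) * cg (hi i) * (Tg i * Tw (L.drop (i.1 + 1))) := by
        rw [Tc_rel]; noncomm_ring
    _ = cg (hi i) * Tw L := by
        rw [htake, hsplit]; noncomm_ring

end Lists

section Main

variable {n : ℕ}

local notation "v'" => algebraMap Av (HC n) vA

lemma vm1_comm (x : HC n) : x * (v' - 1) = (v' - 1) * x := by
  rw [mul_sub, sub_mul, mul_one, one_mul, Algebra.commutes]

lemma mainQ (hn : 1 ≤ n) :
    ∀ k, ∀ hk : k ≤ n - 1,
    Tw ((List.finRange (n - 1)).take k) * cg ⟨k, by omega⟩ =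
      cg ⟨0, by omega⟩ *
          (((List.finRange (n - 1)).take k).map
            (fun i => Tg i - algebraMap Av (HC n) vA + 1)).prod +
        (algebraMap Av (HC n) vA - 1) *
          ∑ j ∈ Finset.range k,
            if h : j < n - 1 then
              cg ⟨j + 1, by omega⟩ * Tw ((List.finRange (n - 1)).take j) *
                ((((List.finRange (n - 1)).take k).drop (j + 1)).map
                  (fun i => Tg i - algebraMap Av (HC n) vA + 1)).prod
            else 0 := by
  intro k
  induction k with
  | zero =>
      intro hk
      simp [Tw]
  | succ k ih =>
      intro hk
      have hk' : k < n - 1 := by omega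
      have ihk := ih (by omega)
      set L := List.finRange (n - 1) with hL
      set f : Fin (n - 1) → HC n := fun i => Tg i - v' + 1 with hf
      set i₀ : Fin (n - 1) := ⟨k, hk'⟩ with hi₀
      have htake : L.take (k + 1) = L.take k ++ [i₀] := take_succ_finRange hk'
      have hlenk : (L.take k).length = k := by
        simp [hL, List.length_take]
        omega
      -- the primed product splits
      have hPk1 : ((L.take (k + 1)).map f).prod = ((L.take k).map f).prod * f i₀ := by
        rw [htake]
        simp
      -- commutation of c_{k+1} with T_0 ⋯ T_{k-1}
      have hcomm : Tw (L.take k) * cg (hi i₀) = cg (hi i₀) * Tw (L.take k) := by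
        apply Tw_comm_cg
        intro j hj
        have := mem_take_finRange (hL ▸ hj)
        constructor <;> · simp only [lo, hi, Fin.ext_iff, ne_eq, hi₀]; omega
      -- last term of the sum
      have hlast : ((L.take (k + 1)).drop (k + 1)) = [] := by
        apply List.drop_eq_nil_of_le
        simp [hL, List.length_take]
      -- the remaining terms
      have hsum : ∀ j ∈ Finset.range k,
          (if h : j < n - 1 then
            cg ⟨j + 1, by omega⟩ * Tw (L.take j) *
              (((L.take (k + 1)).drop (j + 1)).map f).prod
           else 0) =
          (if h : j < n - 1 then
            cg ⟨j + 1, by omega⟩ * Tw (L.take j) *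
              (((L.take k).drop (j + 1)).map f).prod
           else 0) * f i₀ := by
        intro j hj
        have hjk : j < k := Finset.mem_range.mp hj
        rw [dif_pos (by omega), dif_pos (by omega)]
        have hd : (L.take (k + 1)).drop (j + 1) = (L.take k).drop (j + 1) ++ [i₀] := by
          rw [htake, List.drop_append_of_le_length (by omega)]
        rw [hd]
        simp [mul_assoc]
      calc Tw (L.take (k + 1)) * cg ⟨k + 1, by omega⟩
          = Tw (L.take k) * (Tg i₀ * cg (hi i₀)) := by
            rw [htake, Tw_append, Tw_singleton, mul_assoc]
            rfl
        _ = Tw (L.take k) * (cg (lo i₀) * f i₀ + (v' - 1) * cg (hi i₀)) := by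
            rw [Tchi]
        _ = (Tw (L.take k) * cg (lo i₀)) * f i₀ +
              (v' - 1) * (cg (hi i₀) * Tw (L.take k)) := by
            have h2 : Tw (L.take k) * ((v' - 1) * cg (hi i₀)) =
                (v' - 1) * (cg (hi i₀) * Tw (L.take k)) := by
              rw [← mul_assoc, vm1_comm, mul_assoc, hcomm]
            rw [mul_add, h2, ← mul_assoc]
        _ = (cg ⟨0, by omega⟩ * ((L.take k).map f).prod +
              (v' - 1) * ∑ j ∈ Finset.range k,
                (if h : j < n - 1 then
                  cg ⟨j + 1, by omega⟩ * Tw (L.take j) *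
                    (((L.take k).drop (j + 1)).map f).prod
                 else 0)) * f i₀ +
              (v' - 1) * (cg (hi i₀) * Tw (L.take k)) := by
            have hloe : cg (n := n) (lo i₀) = cg ⟨k, by omega⟩ := rfl
            rw [hloe, ihk]
        _ = cg ⟨0, by omega⟩ * ((L.take (k + 1)).map f).prod +
              (v' - 1) *
                ∑ j ∈ Finset.range (k + 1),
                  (if h : j < n - 1 then
                    cg ⟨j + 1, by omega⟩ * Tw (L.take j) *
                      (((L.take (k + 1)).drop (j + 1)).map f).prod
                   else 0) := by
            rw [Finset.sum_range_succ, dif_pos hk', hlast, hPk1,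
              Finset.sum_congr rfl hsum, ← Finset.sum_mul]
            simp only [List.map_nil, List.prod_nil, mul_one]
            noncomm_ring

end Main

/-- The two identities of Lemma `lem:coxHn` in `HC_n`. -/
theorem statement_4 (n : ℕ) (hn : 1 ≤ n) :
    (∀ i : Fin (n - 1),
      Tw (List.finRange (n - 1)) * cg (lo i) = cg (hi i) * Tw (List.finRange (n - 1))) ∧
    Tw (List.finRange (n - 1)) * cg ⟨n - 1, by omega⟩ =
      cg ⟨0, by omega⟩ *
          ((List.finRange (n - 1)).map (fun i => Tg i - algebraMap Av (HC n) vA + 1)).prod +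
        algebraMap Av (HC n) (vA - 1) *
          ∑ j : Fin (n - 1),
            cg (hi j) * Tw ((List.finRange (n - 1)).take j.1) *
              (((List.finRange (n - 1)).drop (j.1 + 1)).map
                (fun i => Tg i - algebraMap Av (HC n) vA + 1)).prod := by
  constructor
  · intro i
    exact part1 i
  · have hQ := mainQ (n := n) hn (n - 1) le_rfl
    have htakeall : (List.finRange (n - 1)).take (n - 1) = List.finRange (n - 1) :=
      List.take_of_length_le (by simp)
    rw [htakeall] at hQ
    rw [hQ, map_sub, map_one]
    have hsum2 : ∑ j : Fin (n - 1),
        cg (hi j) * Tw ((List.finRange (n - 1)).take j.1) *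
          (((List.finRange (n - 1)).drop (j.1 + 1)).map
            (fun i => Tg i - algebraMap Av (HC n) vA + 1)).prod =
        ∑ j ∈ Finset.range (n - 1),
          if h : j < n - 1 then
            cg ⟨j + 1, by omega⟩ * Tw ((List.finRange (n - 1)).take j) *
              (((List.finRange (n - 1)).drop (j + 1)).map
                (fun i => Tg i - algebraMap Av (HC n) vA + 1)).prod
          else 0 := by
      rw [← Fin.sum_univ_eq_sum_range (fun j =>
        if h : j < n - 1 then
          cg ⟨j + 1, by omega⟩ * Tw ((List.finRange (n - 1)).take j) *
            (((List.finRange (n - 1)).drop (j + 1)).map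
              (fun i => Tg i - algebraMap Av (HC n) vA + 1)).prod
        else 0) (n - 1)]
      apply Finset.sum_congr rfl
      intro j _
      rw [dif_pos j.2]
      rfl
    rw [hsum2]


end
end

section
/- Set x_n := T_1 T_2 ⋯ T_{n−1} in HC_n. For every subset I ⊆ {1,…,n} with |I| even, there exists ε ∈ {1, −1} such that x_n C_I − ε x_n lies in [HC_n, HC_n]. -/
noncomputable section

namespace Stmt5

variable {n : ℕ}

lemma ne_lo {i : Fin (n - 1)} {j : Fin n} (h : j.1 ≠ i.1) : j ≠ lo i :=
  fun he => h (congrArg Fin.val he)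

lemma ne_hi {i : Fin (n - 1)} {j : Fin n} (h : j.1 ≠ i.1 + 1) : j ≠ hi i :=
  fun he => h (congrArg Fin.val he)

lemma hneg_mul (a b : HC n) : -a * b = -(a * b) := neg_mul a b

lemma hmul_neg (a b : HC n) : a * -b = -(a * b) := mul_neg a b

lemma hmul_neg_one (a : HC n) : a * -1 = -a := mul_neg_one a

lemma hneg_one_mul (a : HC n) : -1 * a = -a := neg_one_mul a

lemma cg_sq (j : Fin n) : cg j * cg j = 1 := by
  have h := RingQuot.mkAlgHom_rel Av (HCrel.csq j)
  simpa [cg, map_mul, map_one] using h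

lemma cg_anti {i j : Fin n} (h : i ≠ j) : cg i * cg j = -(cg j * cg i) := by
  have h' := RingQuot.mkAlgHom_rel Av (HCrel.canti i j h)
  simpa [cg, map_mul, map_neg] using h'

lemma Tg_cg_comm {i : Fin (n - 1)} {j : Fin n} (h1 : j ≠ lo i) (h2 : j ≠ hi i) :
    Tg i * cg j = cg j * Tg i := by
  have h := RingQuot.mkAlgHom_rel Av (HCrel.Tccomm i j h1 h2)
  simpa [Tg, cg, map_mul] using h

lemma Tg_cg_lo (i : Fin (n - 1)) : Tg i * cg (lo i) = cg (hi i) * Tg i := by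
  have h := RingQuot.mkAlgHom_rel Av (HCrel.Tc i)
  simpa [Tg, cg, map_mul] using h

lemma Tw_append (L1 L2 : List (Fin (n - 1))) : Tw (L1 ++ L2) = Tw L1 * Tw L2 := by
  simp [Tw, List.map_append, List.prod_append]

lemma Tw_cons (a : Fin (n - 1)) (L : List (Fin (n - 1))) : Tw (a :: L) = Tg a * Tw L := by
  simp [Tw]

lemma Tw_comm_cg {L : List (Fin (n - 1))} {j : Fin n}
    (h : ∀ i ∈ L, j ≠ lo i ∧ j ≠ hi i) : Tw L * cg j = cg j * Tw L := by
  induction L with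
  | nil => simp [Tw]
  | cons a t ih =>
    have ha := h a (by simp)
    rw [Tw_cons, mul_assoc, ih (fun i him => h i (by simp [him])), ← mul_assoc,
      Tg_cg_comm ha.1 ha.2, mul_assoc]

lemma mem_take_finRange {m k : ℕ} {i : Fin m} (h : i ∈ (List.finRange m).take k) : i.1 < k := by
  rw [List.mem_iff_getElem] at h
  obtain ⟨p, hp, hpe⟩ := h
  simp only [List.length_take, List.length_finRange, lt_min_iff] at hp
  simp only [List.getElem_take, List.getElem_finRange] at hpe
  rw [← hpe]
  exact hp.1

lemma mem_drop_finRange {m k : ℕ} {i : Fin m} (h : i ∈ (List.finRange m).drop k) : k ≤ i.1 := by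
  rw [List.mem_iff_getElem] at h
  obtain ⟨p, hp, hpe⟩ := h
  simp only [List.getElem_drop, List.getElem_finRange] at hpe
  rw [← hpe]
  simp only [Fin.coe_cast]
  omega

lemma x_mul_cg {j : Fin n} (hj : j.1 + 1 < n) :
    Tw (List.finRange (n - 1)) * cg j = cg ⟨j.1 + 1, hj⟩ * Tw (List.finRange (n - 1)) := by
  have hj' : j.1 < n - 1 := by omega
  set m : Fin (n - 1) := ⟨j.1, hj'⟩ with hm
  set L := List.finRange (n - 1) with hL
  have hjl : j.1 < L.length := by rw [hL, List.length_finRange]; omega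
  have hdecomp : L = L.take j.1 ++ m :: L.drop (j.1 + 1) := by
    conv_lhs => rw [← List.take_append_drop j.1 L]
    congr 1
    rw [List.drop_eq_getElem_cons hjl]
    congr 1
    simp [hL, hm, Fin.ext_iff]
  have h1 : ∀ i ∈ L.drop (j.1 + 1), j ≠ lo i ∧ j ≠ hi i := by
    intro i him
    rw [hL] at him
    have hv := mem_drop_finRange him
    exact ⟨ne_lo (by omega), ne_hi (by omega)⟩
  have h2 : ∀ i ∈ L.take j.1,
      (⟨j.1 + 1, hj⟩ : Fin n) ≠ lo i ∧ (⟨j.1 + 1, hj⟩ : Fin n) ≠ hi i := by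
    intro i him
    rw [hL] at him
    have hv := mem_take_finRange him
    exact ⟨ne_lo (by simp; omega), ne_hi (by simp; omega)⟩
  have hkey : Tg m * cg j = cg ⟨j.1 + 1, hj⟩ * Tg m := by
    have h := Tg_cg_lo m
    have e1 : lo m = j := by
      rw [hm]
      exact Fin.ext rfl
    have e2 : hi m = (⟨j.1 + 1, hj⟩ : Fin n) := by
      rw [hm]
      exact Fin.ext rfl
    rw [e1, e2] at h
    exact h
  conv_lhs => rw [hdecomp]
  conv_rhs => rw [hdecomp]
  rw [Tw_append, Tw_cons, mul_assoc, mul_assoc, Tw_comm_cg h1, ← mul_assoc (Tg m), hkey,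
    mul_assoc (cg ⟨j.1 + 1, hj⟩) (Tg m), ← mul_assoc (Tw (L.take j.1)), Tw_comm_cg h2,
    mul_assoc]

lemma Cset_empty : Cset (∅ : Finset (Fin n)) = 1 := by simp [Cset]

lemma Cset_min {I : Finset (Fin n)} {m : Fin n} (hm : m ∈ I) (hmin : ∀ b ∈ I.erase m, m ≤ b) :
    Cset I = cg m * Cset (I.erase m) := by
  conv_lhs => rw [← Finset.insert_erase hm]
  simp only [Cset]
  rw [Finset.sort_insert (· ≤ ·) hmin (Finset.notMem_erase m I), List.map_cons, List.prod_cons]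

lemma Cset_insert_min {I : Finset (Fin n)} {m : Fin n} (hm : m ∉ I) (hmin : ∀ b ∈ I, m ≤ b) :
    Cset (insert m I) = cg m * Cset I := by
  simp only [Cset]
  rw [Finset.sort_insert (· ≤ ·) hmin hm, List.map_cons, List.prod_cons]

lemma prod_cg_mul_cg {l : List (Fin n)} {a : Fin n} (h : ∀ b ∈ l, a ≠ b) :
    (l.map cg).prod * cg a = (-1) ^ l.length * (cg a * (l.map cg).prod) := by
  induction l with
  | nil => simp
  | cons b t ih =>
    have hab : b ≠ a := (h b (by simp)).symm
    have hba : cg b * cg a = -(cg a * cg b) := cg_anti hab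
    set P := (t.map cg).prod with hP
    set s : HC n := (-1 : HC n) ^ t.length with hs
    have hc : cg b * s = s * cg b :=
      (((Commute.neg_one_left (cg b)).pow_left t.length).eq).symm
    have ih' : P * cg a = s * (cg a * P) := ih (fun c hc => h c (by simp [hc]))
    simp only [List.map_cons, List.prod_cons, List.length_cons, ← hP, pow_succ, ← hs]
    calc (cg b * P) * cg a
        = cg b * (P * cg a) := mul_assoc _ _ _
      _ = cg b * (s * (cg a * P)) := by rw [ih']
      _ = (cg b * s) * (cg a * P) := (mul_assoc _ _ _).symm
      _ = (s * cg b) * (cg a * P) := by rw [hc]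
      _ = s * ((cg b * cg a) * P) := by rw [mul_assoc, ← mul_assoc (cg b)]
      _ = s * (-(cg a * cg b) * P) := by rw [hba]
      _ = s * -((cg a * cg b) * P) := by rw [hneg_mul]
      _ = -(s * ((cg a * cg b) * P)) := by rw [hmul_neg]
      _ = -(s * (cg a * (cg b * P))) := by rw [mul_assoc (cg a)]
      _ = -s * (cg a * (cg b * P)) := by rw [hneg_mul]
      _ = (s * -1) * (cg a * (cg b * P)) := by rw [hmul_neg_one]

lemma Cset_mul_cg {I : Finset (Fin n)} {a : Fin n} (ha : a ∉ I) :
    Cset I * cg a = (-1) ^ I.card * (cg a * Cset I) := by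
  have h : ∀ b ∈ I.sort (· ≤ ·), a ≠ b := by
    intro b hb he
    exact ha (he ▸ (Finset.mem_sort _).1 hb)
  simpa [Cset, Finset.length_sort] using prod_cg_mul_cg h

lemma comm_mem (a b : HC n) : a * b - b * a ∈ commSpan n :=
  Submodule.subset_span ⟨a, b, rfl⟩

end Stmt5

open Stmt5

/-- For `I ⊆ [n]` with `|I|` even, `x_n C_I ≡ ± x_n mod [HC_n, HC_n]`,
where `x_n = T_1 ⋯ T_{n-1}`. -/
theorem statement_5 (n : ℕ) (hn : 1 ≤ n) (I : Finset (Fin n)) (hI : Even I.card) :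
    ∃ ε : Av, (ε = 1 ∨ ε = -1) ∧
      Tw (List.finRange (n - 1)) * Cset I - ε • Tw (List.finRange (n - 1)) ∈ commSpan n := by
  classical
  set x := Tw (List.finRange (n - 1)) with hx
  suffices H : ∀ N : ℕ, ∀ I : Finset (Fin n), (∑ i ∈ I, (n - i.1)) = N → Even I.card →
      ∃ ε : Av, (ε = 1 ∨ ε = -1) ∧ x * Cset I - ε • x ∈ commSpan n by
    exact H _ I rfl hI
  clear hI I
  intro N
  induction N using Nat.strong_induction_on with
  | _ N ih =>
    intro I hN hI
    rcases Finset.eq_empty_or_nonempty I with rfl | hne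
    · refine ⟨1, Or.inl rfl, ?_⟩
      have h0 : x * Cset (∅ : Finset (Fin n)) - (1 : Av) • x = 0 := by
        rw [Cset_empty, mul_one, one_smul]
        exact sub_self x
      rw [h0]
      exact zero_mem _
    have hcard2 : 2 ≤ I.card := by
      obtain ⟨k, hk⟩ := hI
      have := Finset.card_pos.mpr hne
      omega
    set m := I.min' hne with hm
    have hmI : m ∈ I := I.min'_mem hne
    obtain ⟨m', hm'I, hm'ne⟩ := Finset.exists_mem_ne (s := I) (by omega) m
    have hlt : m < m' := lt_of_le_of_ne (I.min'_le m' hm'I) (Ne.symm hm'ne)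
    have hj : m.1 + 1 < n := by
      have h1 : m.1 < m'.1 := hlt
      have h2 : m'.1 < n := m'.2
      omega
    set mp : Fin n := ⟨m.1 + 1, hj⟩ with hmp
    have hmpval : mp.1 = m.1 + 1 := by rw [hmp]
    set I' := I.erase m with hI'
    have hI'card : I'.card = I.card - 1 := by
      rw [hI']
      exact Finset.card_erase_of_mem hmI
    have hminle : ∀ b ∈ I', m ≤ b := by
      intro b hb
      rw [hI'] at hb
      exact I.min'_le b (Finset.mem_of_mem_erase hb)
    have hminlt : ∀ b ∈ I', m < b := by
      intro b hb
      refine lt_of_le_of_ne (hminle b hb) ?_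
      rw [hI'] at hb
      exact (Finset.ne_of_mem_erase hb).symm
    have hmple : ∀ b ∈ I', mp ≤ b := by
      intro b hb
      have h1 : m.1 < b.1 := hminlt b hb
      rw [Fin.le_def, hmpval]
      omega
    have hsplit : Cset I = cg m * Cset I' := by
      rw [hI']
      exact Cset_min hmI (by rw [hI'] at hminle; exact hminle)
    have hmain : x * Cset I = cg mp * (x * Cset I') := by
      rw [hsplit, ← mul_assoc, hx, x_mul_cg hj, mul_assoc, hmp]
    have hcomm : cg mp * (x * Cset I') - (x * Cset I') * cg mp ∈ commSpan n := comm_mem _ _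
    have e1 : (n - m.1) + ∑ i ∈ I', (n - i.1) = N := by
      rw [hI', Finset.add_sum_erase I (fun i => n - i.1) hmI]
      exact hN
    by_cases hcase : mp ∈ I'
    · -- collision: drop m and mp
      set I'' := I'.erase mp with hI''
      have hmple2 : ∀ b ∈ I''.toList, True := fun _ _ => trivial
      have hsplit' : Cset I' = cg mp * Cset I'' := by
        rw [hI'']
        exact Cset_min hcase (fun b hb => hmple b (Finset.mem_of_mem_erase hb))
      have hcardI'' : I''.card = I.card - 2 := by
        rw [hI'', Finset.card_erase_of_mem hcase, hI'card]
        omega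
      have heven'' : Even I''.card := by
        obtain ⟨k, hk⟩ := hI
        refine ⟨k - 1, ?_⟩
        rw [hcardI'']
        omega
      have hsgn : ((-1 : HC n)) ^ I''.card = 1 := Even.neg_one_pow (α := HC n) heven''
      have hanti : Cset I'' * cg mp = (-1) ^ I''.card * (cg mp * Cset I'') := by
        apply Cset_mul_cg
        rw [hI'']
        exact Finset.notMem_erase _ _
      have haux : (cg mp * Cset I'') * cg mp = Cset I'' := by
        rw [mul_assoc, hanti, hsgn, one_mul, ← mul_assoc, cg_sq, one_mul]
      have hred : (x * Cset I') * cg mp = x * Cset I'' := by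
        rw [hsplit', mul_assoc x, haux]
      have e2 : (n - mp.1) + ∑ i ∈ I'', (n - i.1) = ∑ i ∈ I', (n - i.1) := by
        rw [hI'', Finset.add_sum_erase I' (fun i => n - i.1) hcase]
      have hlt'' : ∑ i ∈ I'', (n - i.1) < N := by
        have hmn : m.1 < n := m.2
        omega
      obtain ⟨ε, hε, hmem⟩ := ih _ hlt'' I'' rfl heven''
      refine ⟨ε, hε, ?_⟩
      have key : x * Cset I - ε • x =
          (cg mp * (x * Cset I') - (x * Cset I') * cg mp) + (x * Cset I'' - ε • x) := by
        rw [← hmain, ← hred]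
        abel
      rw [key]
      exact add_mem hcomm hmem
    · -- no collision: replace m by mp
      set J := insert mp I' with hJ
      have hJsplit : Cset J = cg mp * Cset I' := by
        rw [hJ]
        exact Cset_insert_min hcase hmple
      have hodd : Odd I'.card := by
        obtain ⟨k, hk⟩ := hI
        refine ⟨k - 1, ?_⟩
        rw [hI'card]
        omega
      have hsgn : ((-1 : HC n)) ^ I'.card = -1 := Odd.neg_one_pow (α := HC n) hodd
      have hanti : Cset I' * cg mp = (-1) ^ I'.card * (cg mp * Cset I') := Cset_mul_cg hcase
      have hred : (x * Cset I') * cg mp = -(x * Cset J) := by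
        rw [mul_assoc, hanti, hsgn, hneg_one_mul, hmul_neg, hJsplit]
      have e2 : ∑ i ∈ J, (n - i.1) = (n - mp.1) + ∑ i ∈ I', (n - i.1) := by
        rw [hJ]
        exact Finset.sum_insert hcase
      have hltJ : ∑ i ∈ J, (n - i.1) < N := by
        have hmn : m.1 + 1 < n := hj
        omega
      have hJcard : Even J.card := by
        rw [hJ, Finset.card_insert_of_notMem hcase, hI'card]
        obtain ⟨k, hk⟩ := hI
        refine ⟨k, ?_⟩
        omega
      obtain ⟨ε, hε, hmem⟩ := ih _ hltJ J rfl hJcard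
      refine ⟨-ε, by rcases hε with h | h <;> simp [h], ?_⟩
      have key : x * Cset I - (-ε) • x =
          (cg mp * (x * Cset I') - (x * Cset I') * cg mp) - (x * Cset J - ε • x) := by
        have hns : (-ε) • x = -(ε • x) := neg_smul ε x
        rw [← hmain, hred, hns]
        abel
      rw [key]
      exact sub_mem hcomm hmem


end
end

section
/- Let γ = (γ_1,…,γ_ℓ) be a composition of n and let μ = (μ_1,…,μ_ℓ) be the partition obtained by rearranging the parts of γ in decreasing order. Then T_{w_γ} − T_{w_μ} lies in [HC_n, HC_n]. -/
noncomputable section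

section Dev
namespace S8

variable {n : ℕ}

/-- `v` as an element of `HC n`. -/
def VA : HC n := algebraMap Av (HC n) vA
/-- `v⁻¹` as an element of `HC n`. -/
def VAi : HC n := algebraMap Av (HC n) (LaurentPolynomial.T (-1))

lemma VA_mul_VAi : (VA : HC n) * VAi = 1 := by
  have h : @HMul.hMul Av Av Av _ vA (LaurentPolynomial.T (-1)) = 1 := by
    have h' : (LaurentPolynomial.T 1 : LaurentPolynomial Zh) * LaurentPolynomial.T (-1) = 1 := by
      rw [← LaurentPolynomial.T_add]; norm_num
    exact h'
  exact (map_mul (algebraMap Av (HC n)) vA (LaurentPolynomial.T (-1))).symm.trans (by rw [h, map_one])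

lemma quadT (i : Fin (n - 1)) : (Tg i - VA) * (Tg i + 1) = (0 : HC n) := by
  have h := RingQuot.mkAlgHom_rel Av (HCrel.quad (n := n) i)
  simpa [Tg, VA, map_mul, map_sub, map_add, map_one] using h

lemma commT {i j : Fin (n - 1)} (h : i.1 + 1 < j.1) : Tg (n := n) i * Tg j = Tg j * Tg i := by
  have h := RingQuot.mkAlgHom_rel Av (HCrel.Tcomm (n := n) i j h)
  simpa [Tg, map_mul] using h

lemma braidT {i j : Fin (n - 1)} (h : i.1 + 1 = j.1) :
    Tg (n := n) i * Tg j * Tg i = Tg j * Tg i * Tg j := by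
  have h := RingQuot.mkAlgHom_rel Av (HCrel.braid (n := n) i j h)
  simpa [Tg, map_mul] using h

lemma Tg_quad_expand (i : Fin (n - 1)) :
    Tg i * Tg i + Tg i - VA * Tg i = (VA : HC n) := by
  have h2 : Tg (n := n) i * Tg i + Tg i - VA * Tg i - VA = 0 := by
    rw [← quadT (n := n) i]; noncomm_ring <;> simp only [smul_mul_assoc, mul_smul_comm] <;> abel
  exact sub_eq_zero.mp h2

lemma Tg_key_r (i : Fin (n - 1)) : Tg i * (Tg i + 1 - VA) = (VA : HC n) := by
  have hc : VA * Tg i = Tg i * VA := Algebra.commutes vA (Tg i)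
  calc Tg i * (Tg i + 1 - VA) = Tg i * Tg i + Tg i - Tg i * VA := by noncomm_ring <;> simp only [smul_mul_assoc, mul_smul_comm]
    _ = Tg i * Tg i + Tg i - VA * Tg i := by rw [hc]
    _ = VA := Tg_quad_expand i

lemma Tg_key_l (i : Fin (n - 1)) : (Tg i + 1 - VA) * Tg i = (VA : HC n) := by
  calc (Tg i + 1 - VA) * Tg i = Tg i * Tg i + Tg i - VA * Tg i := by noncomm_ring <;> simp only [smul_mul_assoc, mul_smul_comm]
    _ = VA := Tg_quad_expand i

/-- ℕ-indexed generator, `1` out of range. -/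
def Tnat (j : ℕ) : HC n := if h : j < n - 1 then Tg ⟨j, h⟩ else 1

/-- ℕ-indexed inverse generator. -/
def TnatInv (j : ℕ) : HC n :=
  if h : j < n - 1 then VAi * (Tg ⟨j, h⟩ + 1 - VA) else 1

lemma VAi_comm (x : HC n) : VAi * x = x * VAi := Algebra.commutes _ x

lemma Tnat_mul_inv (j : ℕ) : Tnat (n := n) j * TnatInv j = 1 := by
  unfold Tnat TnatInv
  split_ifs with h
  · rw [VAi_comm, ← mul_assoc, Tg_key_r, VA_mul_VAi]
  · rw [one_mul]

lemma TnatInv_mul (j : ℕ) : TnatInv (n := n) j * Tnat j = 1 := by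
  unfold Tnat TnatInv
  split_ifs with h
  · rw [mul_assoc, Tg_key_l, VAi_comm, VA_mul_VAi]
  · rw [one_mul]

lemma Tnat_comm {i j : ℕ} (h : i + 1 < j) :
    Tnat (n := n) i * Tnat j = Tnat j * Tnat i := by
  unfold Tnat
  by_cases hj : j < n - 1
  · have hi : i < n - 1 := by omega
    rw [dif_pos hj, dif_pos hi]
    exact commT h
  · rw [dif_neg hj, one_mul, mul_one]

lemma Tnat_braid {i : ℕ} (h : i + 2 ≤ n - 1) :
    Tnat (n := n) i * Tnat (i + 1) * Tnat i = Tnat (i + 1) * Tnat i * Tnat (i + 1) := by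
  have hi : i < n - 1 := by omega
  have hi1 : i + 1 < n - 1 := by omega
  unfold Tnat
  rw [dif_pos hi, dif_pos hi1]
  exact braidT rfl

lemma commute_Tnat {i j : ℕ} (h : i + 1 < j ∨ j + 1 < i) :
    Commute (Tnat (n := n) i) (Tnat j) := by
  rcases h with h | h
  · exact Tnat_comm h
  · exact (Tnat_comm h).symm

/-- Product of `Tnat`s over a list of natural indices. -/
def prodT (L : List ℕ) : HC n := (L.map Tnat).prod

@[simp] lemma prodT_nil : prodT (n := n) [] = 1 := rfl

lemma prodT_cons (a : ℕ) (L : List ℕ) :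
    prodT (n := n) (a :: L) = Tnat a * prodT L := by simp [prodT]

lemma prodT_append (L₁ L₂ : List ℕ) :
    prodT (n := n) (L₁ ++ L₂) = prodT L₁ * prodT L₂ := by simp [prodT]

lemma prodT_singleton (a : ℕ) : prodT (n := n) [a] = Tnat a := by simp [prodT]

lemma commute_prodT_right {x : HC n} {L : List ℕ}
    (h : ∀ j ∈ L, Commute x (Tnat (n := n) j)) : Commute x (prodT L) := by
  apply Commute.list_prod_right
  intro y hy
  rcases List.mem_map.mp hy with ⟨j, hj, rfl⟩
  exact h j hj

lemma commute_prodT_prodT {L₁ L₂ : List ℕ}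
    (h : ∀ i ∈ L₁, ∀ j ∈ L₂, i + 1 < j ∨ j + 1 < i) :
    Commute (prodT (n := n) L₁) (prodT L₂) := by
  apply Commute.list_prod_left
  intro y hy
  rcases List.mem_map.mp hy with ⟨i, hi, rfl⟩
  exact commute_prodT_right fun j hj => commute_Tnat (h i hi j hj)

/-- The inverse of `prodT L`. -/
def prodTInv (L : List ℕ) : HC n := (L.reverse.map TnatInv).prod

lemma prodT_mul_prodTInv (L : List ℕ) : prodT (n := n) L * prodTInv L = 1 := by
  induction L with
  | nil => simp [prodTInv]
  | cons a L ih =>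
    have h1 : prodTInv (n := n) (a :: L) = prodTInv L * TnatInv a := by
      simp [prodTInv]
    rw [prodT_cons, h1, mul_assoc, ← mul_assoc (prodT L), ih, one_mul, Tnat_mul_inv]

lemma prodTInv_mul_prodT (L : List ℕ) : prodTInv (n := n) L * prodT L = 1 := by
  induction L with
  | nil => simp [prodTInv]
  | cons a L ih =>
    have h1 : prodTInv (n := n) (a :: L) = prodTInv L * TnatInv a := by
      simp [prodTInv]
    rw [prodT_cons, h1, mul_assoc, ← mul_assoc (TnatInv a), TnatInv_mul, one_mul, ih]

lemma pow_mul_pow_inv {x y : HC n} (hxy : x * y = 1) : ∀ s : ℕ, x ^ s * y ^ s = 1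
  | 0 => by simp
  | s + 1 => by
    rw [pow_succ x, pow_succ' y, mul_assoc, ← mul_assoc x y, hxy, one_mul,
      pow_mul_pow_inv hxy s]

lemma mul_right_cancel_of_inv {g g' x y : HC n} (hgg' : g * g' = 1)
    (h : x * g = y * g) : x = y := by
  have h2 := congrArg (· * g') h
  simpa [mul_assoc, hgg'] using h2

/-- The "run" `T_p T_{p+1} ⋯ T_{p+k-1}`. -/
def run (p k : ℕ) : HC n := prodT (List.range' p k)

@[simp] lemma run_zero (p : ℕ) : run (n := n) p 0 = 1 := rfl

lemma run_one (p : ℕ) : run (n := n) p 1 = Tnat p := by simp [run, prodT]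

lemma run_succ (p k : ℕ) : run (n := n) p (k + 1) = run p k * Tnat (p + k) := by
  have : List.range' p (k + 1) = List.range' p k ++ [p + k] := by
    rw [List.range'_concat, Nat.one_mul]
  rw [run, this, prodT_append, prodT_singleton, run]

lemma commute_run_right {x : HC n} {p k : ℕ}
    (h : ∀ j, p ≤ j → j < p + k → Commute x (Tnat (n := n) j)) :
    Commute x (run p k) := by
  apply commute_prodT_right
  intro j hj
  rw [List.mem_range'_1] at hj
  exact h j hj.1 hj.2

lemma shift {p k j : ℕ} (hpj : p ≤ j) (hjk : j + 2 ≤ p + k) (hn : p + k ≤ n - 1) :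
    run (n := n) p k * Tnat j = Tnat (j + 1) * run p k := by
  induction k with
  | zero => omega
  | succ k ih =>
    rw [run_succ]
    rcases Nat.lt_or_ge (j + 2) (p + k + 1) with hlt | hge
    · -- j + 2 ≤ p + k : use IH and commutation with last factor
      have hc : Commute (Tnat (n := n) j) (Tnat (p + k)) := commute_Tnat (by omega)
      rw [mul_assoc, ← hc.eq, ← mul_assoc, ih (by omega) (by omega), mul_assoc]
    · -- p + k = j + 1
      have hpk : p + k = j + 1 := by omega
      have hk : k = (k - 1) + 1 := by omega
      have hpk1 : p + (k - 1) = j := by omega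
      rw [hpk, hk, run_succ, hpk1]
      have hbr : Tnat (n := n) j * Tnat (j + 1) * Tnat j
          = Tnat (j + 1) * Tnat j * Tnat (j + 1) := Tnat_braid (by omega)
      have hcomm : Commute (Tnat (n := n) (j + 1)) (run p (k - 1)) := by
        apply commute_run_right
        intro m hm hm2
        exact commute_Tnat (by omega)
      calc run p (k - 1) * Tnat j * Tnat (j + 1) * Tnat j
          = run p (k - 1) * (Tnat j * Tnat (j + 1) * Tnat j) := by
            simp only [mul_assoc]
        _ = run p (k - 1) * (Tnat (j + 1) * Tnat j * Tnat (j + 1)) := by rw [hbr]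
        _ = run p (k - 1) * Tnat (j + 1) * Tnat j * Tnat (j + 1) := by
            simp only [mul_assoc]
        _ = Tnat (j + 1) * run p (k - 1) * Tnat j * Tnat (j + 1) := by
            rw [← hcomm.eq]
        _ = Tnat (j + 1) * (run p (k - 1) * Tnat j * Tnat (j + 1)) := by
            simp only [mul_assoc]

lemma shift_run {p K q k : ℕ} (hpq : p ≤ q) (hk : q + k + 1 ≤ p + K)
    (hn : p + K ≤ n - 1) :
    run (n := n) p K * run q k = run (q + 1) k * run p K := by
  induction k with
  | zero => simp
  | succ k ih =>
    have he : q + 1 + k = q + k + 1 := by omega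
    rw [run_succ, run_succ, he, ← mul_assoc, ih (by omega), mul_assoc,
      shift (by omega) (by omega) hn, ← mul_assoc]

lemma shift_pow {p K q k s : ℕ} (hpq : p ≤ q) (hk : q + k + s ≤ p + K)
    (hn : p + K ≤ n - 1) :
    (run (n := n) p K) ^ s * run q k = run (q + s) k * (run p K) ^ s := by
  induction s generalizing q with
  | zero => simp
  | succ s ih =>
    have he : q + 1 + s = q + s + 1 := by omega
    rw [pow_succ, mul_assoc, shift_run hpq (by omega) hn, ← mul_assoc,
      ih (by omega) (by omega), he, mul_assoc, ← pow_succ,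
      show q + (s + 1) = q + s + 1 by omega]

lemma Fsq {p k : ℕ} (hn : p + k + 2 ≤ n) :
    run (n := n) p (k + 1) * run p (k + 1) * Tnat (p + k)
      = Tnat p * (run p (k + 1) * run p (k + 1)) := by
  induction k with
  | zero =>
    rw [run_succ, run_zero, one_mul, Nat.add_zero]
    simp only [mul_assoc]
  | succ k ih =>
    have hG : run (n := n) p (k + 1 + 1) = run p (k + 1) * Tnat (p + (k + 1)) :=
      run_succ p (k + 1)
    have hH : run (n := n) p (k + 1) = run p k * Tnat (p + k) := run_succ p k
    set G := run (n := n) p (k + 1) with hGdef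
    set H := run (n := n) p k with hHdef
    set Tq := Tnat (n := n) (p + (k + 1)) with hTq
    set Tr := Tnat (n := n) (p + k) with hTr
    have hcomm : Tq * H = H * Tq := by
      apply (commute_run_right ?_).eq
      intro m hm hm2
      exact commute_Tnat (by omega)
    have hbr : Tr * Tq * Tr = Tq * Tr * Tq := by
      have h1 : p + (k + 1) = (p + k) + 1 := by omega
      rw [hTq, hTr, h1]
      exact Tnat_braid (by omega)
    have ih' : G * G * Tr = Tnat p * (G * G) := ih (by omega)
    have hX : G * Tq * (G * Tq) = (G * G) * (Tq * Tr) := by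
      calc G * Tq * (G * Tq)
          = G * (Tq * G) * Tq := by simp only [mul_assoc]
        _ = G * (H * (Tq * Tr)) * Tq := by
            rw [hH, ← mul_assoc Tq H, hcomm]
            simp only [mul_assoc]
        _ = (G * H) * (Tq * Tr * Tq) := by simp only [mul_assoc]
        _ = (G * H) * (Tr * Tq * Tr) := by rw [hbr]
        _ = (G * (H * Tr)) * (Tq * Tr) := by simp only [mul_assoc]
        _ = (G * G) * (Tq * Tr) := by rw [← hH]
    rw [hG]
    calc G * Tq * (G * Tq) * Tq
        = (G * G) * (Tq * Tr) * Tq := by rw [hX]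
      _ = (G * G) * (Tq * Tr * Tq) := by simp only [mul_assoc]
      _ = (G * G) * (Tr * Tq * Tr) := by rw [hbr]
      _ = (G * G * Tr) * (Tq * Tr) := by simp only [mul_assoc]
      _ = Tnat p * (G * G) * (Tq * Tr) := by rw [ih']
      _ = Tnat p * ((G * G) * (Tq * Tr)) := by simp only [mul_assoc]
      _ = Tnat p * (G * Tq * (G * Tq)) := by rw [← hX]

lemma Fm_comm {p k j : ℕ} (hpj : p ≤ j) (hj : j ≤ p + k) (hn : p + k + 2 ≤ n) :
    (run (n := n) p (k + 1)) ^ (k + 2) * Tnat j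
      = Tnat j * (run p (k + 1)) ^ (k + 2) := by
  set F := run (n := n) p (k + 1) with hF
  have hnF : p + (k + 1) ≤ n - 1 := by omega
  have hsplit : (k + 2) = (j - p) + (2 + (p + k - j)) := by omega
  have h1 : F ^ (p + k - j) * Tnat j = Tnat (p + k) * F ^ (p + k - j) := by
    have := shift_pow (n := n) (p := p) (K := k + 1) (q := j) (k := 1)
      (s := p + k - j) hpj (by omega) hnF
    rw [run_one, run_one, show j + (p + k - j) = p + k by omega] at this
    exact this
  have h2 : F ^ 2 * Tnat (p + k) = Tnat p * F ^ 2 := by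
    rw [pow_two]
    exact Fsq hn
  have h3 : F ^ (j - p) * Tnat p = Tnat j * F ^ (j - p) := by
    have := shift_pow (n := n) (p := p) (K := k + 1) (q := p) (k := 1)
      (s := j - p) le_rfl (by omega) hnF
    rw [run_one, run_one, show p + (j - p) = j by omega] at this
    exact this
  calc F ^ (k + 2) * Tnat j
      = F ^ (j - p) * (F ^ 2 * (F ^ (p + k - j) * Tnat j)) := by
        rw [hsplit, pow_add, pow_add]
        simp only [mul_assoc]
    _ = F ^ (j - p) * (F ^ 2 * Tnat (p + k)) * F ^ (p + k - j) := by
        rw [h1]; simp only [mul_assoc]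
    _ = F ^ (j - p) * (Tnat p * F ^ 2) * F ^ (p + k - j) := by rw [h2]
    _ = (F ^ (j - p) * Tnat p) * (F ^ 2 * F ^ (p + k - j)) := by simp only [mul_assoc]
    _ = Tnat j * F ^ (j - p) * (F ^ 2 * F ^ (p + k - j)) := by rw [h3]
    _ = Tnat j * F ^ (k + 2) := by
        rw [hsplit, pow_add, pow_add]
        simp only [mul_assoc]

lemma Fm_comm_prod {p k : ℕ} {L : List ℕ} (hL : ∀ j ∈ L, p ≤ j ∧ j ≤ p + k)
    (hn : p + k + 2 ≤ n) :
    (run (n := n) p (k + 1)) ^ (k + 2) * prodT L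
      = prodT L * (run p (k + 1)) ^ (k + 2) := by
  apply (commute_prodT_right ?_).eq
  intro j hj
  exact Fm_comm (hL j hj).1 (hL j hj).2 hn

lemma swap_core {p a' b' : ℕ} (hn : p + a' + b' + 2 ≤ n) :
    (run (n := n) p (a' + b' + 1)) ^ (b' + 1) * (run p a' * run (p + a' + 1) b')
      = (run p b' * run (p + b' + 1) a') * (run p (a' + b' + 1)) ^ (b' + 1) := by
  set F := run (n := n) p (a' + b' + 1) with hF
  have hnF : p + (a' + b' + 1) ≤ n - 1 := by omega
  have h1 : F ^ (b' + 1) * run p a' = run (p + (b' + 1)) a' * F ^ (b' + 1) :=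
    shift_pow le_rfl (by omega) hnF
  have h2 : F ^ (a' + 1) * run p b' = run (p + (a' + 1)) b' * F ^ (a' + 1) :=
    shift_pow le_rfl (by omega) hnF
  have h3 : F ^ (a' + b' + 2) * run p b' = run p b' * F ^ (a' + b' + 2) := by
    rw [hF, show a' + b' + 1 = (a' + b') + 1 by ring, show a' + b' + 2 = (a' + b') + 2 by ring]
    apply Fm_comm_prod (k := a' + b')
    · intro j hj
      rw [List.mem_range'_1] at hj
      omega
    · omega
  have hinv : F ^ (a' + 1) * (prodTInv (List.range' p (a' + b' + 1))) ^ (a' + 1) = 1 :=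
    pow_mul_pow_inv (prodT_mul_prodTInv _) _
  have h4 : F ^ (b' + 1) * run (p + (a' + 1)) b' = run p b' * F ^ (b' + 1) := by
    apply mul_right_cancel_of_inv hinv
    calc F ^ (b' + 1) * run (p + (a' + 1)) b' * F ^ (a' + 1)
        = F ^ (b' + 1) * (run (p + (a' + 1)) b' * F ^ (a' + 1)) := by
          simp only [mul_assoc]
      _ = F ^ (b' + 1) * (F ^ (a' + 1) * run p b') := by rw [← h2]
      _ = F ^ (a' + b' + 2) * run p b' := by
          rw [← mul_assoc, ← pow_add, show b' + 1 + (a' + 1) = a' + b' + 2 by ring]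
      _ = run p b' * F ^ (a' + b' + 2) := h3
      _ = run p b' * F ^ (b' + 1) * F ^ (a' + 1) := by
          rw [mul_assoc, ← pow_add, show b' + 1 + (a' + 1) = a' + b' + 2 by ring]
  have h5 : Commute (run (n := n) p b') (run (p + (b' + 1)) a') := by
    apply commute_prodT_prodT
    intro i hi j hj
    rw [List.mem_range'_1] at hi hj
    omega
  calc F ^ (b' + 1) * (run p a' * run (p + a' + 1) b')
      = (F ^ (b' + 1) * run p a') * run (p + (a' + 1)) b' := by
        rw [show p + a' + 1 = p + (a' + 1) by ring]; simp only [mul_assoc]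
    _ = run (p + (b' + 1)) a' * (F ^ (b' + 1) * run (p + (a' + 1)) b') := by
        rw [h1]; simp only [mul_assoc]
    _ = run (p + (b' + 1)) a' * (run p b' * F ^ (b' + 1)) := by rw [h4]
    _ = (run (p + (b' + 1)) a' * run p b') * F ^ (b' + 1) := by simp only [mul_assoc]
    _ = (run p b' * run (p + b' + 1) a') * F ^ (b' + 1) := by
        rw [← h5.eq, show p + (b' + 1) = p + b' + 1 by ring]

end S8

/-- The list of ℕ-valued `T`-indices of the word `T_{w_γ}`, for blocks `bl` starting
at position `p`. -/
def natWord : List ℕ → ℕ → List ℕ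
  | [], _ => []
  | a :: rest, p => List.range' p (a - 1) ++ natWord rest (p + a)

namespace S8

lemma natWord_append (l₁ l₂ : List ℕ) (p : ℕ) :
    natWord (l₁ ++ l₂) p = natWord l₁ p ++ natWord l₂ (p + l₁.sum) := by
  induction l₁ generalizing p with
  | nil => simp [natWord]
  | cons a rest ih =>
    rw [List.cons_append, natWord, natWord, ih (p + a), List.append_assoc,
      List.sum_cons, show p + a + rest.sum = p + (a + rest.sum) by ring]

lemma natWord_mem {bl : List ℕ} {p j : ℕ} (h : j ∈ natWord bl p) :
    p ≤ j ∧ j + 2 ≤ p + bl.sum := by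
  induction bl generalizing p with
  | nil => simp [natWord] at h
  | cons a rest ih =>
    rw [natWord, List.mem_append] at h
    rw [List.sum_cons]
    rcases h with h | h
    · rw [List.mem_range'_1] at h
      omega
    · have := ih h
      omega

lemma swap_ctx (pre post : List ℕ) (a b : ℕ) (ha : 1 ≤ a) (hb : 1 ≤ b)
    (hsum : (pre ++ a :: b :: post).sum ≤ n) :
    prodT (n := n) (natWord (pre ++ a :: b :: post) 0)
      - prodT (natWord (pre ++ b :: a :: post) 0) ∈ commSpan n := by
  obtain ⟨a', rfl⟩ : ∃ a', a = a' + 1 := ⟨a - 1, by omega⟩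
  obtain ⟨b', rfl⟩ : ∃ b', b = b' + 1 := ⟨b - 1, by omega⟩
  set p := pre.sum with hp
  have hsum' : p + a' + b' + 2 + post.sum ≤ n := by
    have : (pre ++ (a' + 1) :: (b' + 1) :: post).sum
        = p + a' + b' + 2 + post.sum := by
      rw [List.sum_append, List.sum_cons, List.sum_cons]; ring
    omega
  -- the two elements
  have hE : natWord (pre ++ (a' + 1) :: (b' + 1) :: post) 0
      = natWord pre 0 ++ (List.range' p a' ++ (List.range' (p + (a' + 1)) b'
          ++ natWord post (p + (a' + b' + 2)))) := by
    rw [natWord_append, natWord, natWord, zero_add]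
    simp only [Nat.add_sub_cancel, List.append_assoc]
    rw [show p + (a' + 1) + (b' + 1) = p + (a' + b' + 2) by ring]
  have hE' : natWord (pre ++ (b' + 1) :: (a' + 1) :: post) 0
      = natWord pre 0 ++ (List.range' p b' ++ (List.range' (p + (b' + 1)) a'
          ++ natWord post (p + (a' + b' + 2)))) := by
    rw [natWord_append, natWord, natWord, zero_add]
    simp only [Nat.add_sub_cancel, List.append_assoc]
    rw [show p + (b' + 1) + (a' + 1) = p + (a' + b' + 2) by ring]
  set W₁ := prodT (n := n) (natWord pre 0) with hW₁
  set W₂ := prodT (n := n) (natWord post (p + (a' + b' + 2))) with hW₂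
  set A := run (n := n) p a' with hA
  set B := run (n := n) (p + (a' + 1)) b' with hB
  set A' := run (n := n) p b' with hA'
  set B' := run (n := n) (p + (b' + 1)) a' with hB'
  have hEprod : prodT (n := n) (natWord (pre ++ (a' + 1) :: (b' + 1) :: post) 0)
      = W₁ * (A * (B * W₂)) := by
    rw [hE, prodT_append, prodT_append, prodT_append]; rfl
  have hE'prod : prodT (n := n) (natWord (pre ++ (b' + 1) :: (a' + 1) :: post) 0)
      = W₁ * (A' * (B' * W₂)) := by
    rw [hE', prodT_append, prodT_append, prodT_append]; rfl
  set F := run (n := n) p (a' + b' + 1) with hF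
  set g := F ^ (b' + 1) with hg
  set g' := (prodTInv (n := n) (List.range' p (a' + b' + 1))) ^ (b' + 1) with hg'
  have hgg' : g * g' = 1 := pow_mul_pow_inv (prodT_mul_prodTInv _) _
  have hg'g : g' * g = 1 := pow_mul_pow_inv (prodTInv_mul_prodT _) _
  have hswap : g * (A * B) = (A' * B') * g := by
    rw [hg, hA, hB, hA', hB', hF,
      show p + (a' + 1) = p + a' + 1 by ring]
    exact swap_core (by omega)
  have hgW₁ : Commute g W₁ := by
    apply Commute.pow_left
    apply (commute_prodT_prodT ?_).symm
    intro i hi j hj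
    have h1 := natWord_mem hi
    rw [List.mem_range'_1] at hj
    omega
  have hgW₂ : Commute g W₂ := by
    apply Commute.pow_left
    apply (commute_prodT_prodT ?_).symm
    intro i hi j hj
    have h1 := natWord_mem hi
    rw [List.mem_range'_1] at hj
    omega
  -- key conjugation identity
  have hkey : g * (W₁ * (A * (B * W₂))) = (W₁ * (A' * (B' * W₂))) * g := by
    calc g * (W₁ * (A * (B * W₂)))
        = (g * W₁) * (A * B) * W₂ := by simp only [mul_assoc]
      _ = (W₁ * g) * (A * B) * W₂ := by rw [hgW₁.eq]
      _ = W₁ * (g * (A * B)) * W₂ := by simp only [mul_assoc]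
      _ = W₁ * ((A' * B') * g) * W₂ := by rw [hswap]
      _ = W₁ * (A' * B') * (g * W₂) := by simp only [mul_assoc]
      _ = W₁ * (A' * B') * (W₂ * g) := by rw [hgW₂.eq]
      _ = (W₁ * (A' * (B' * W₂))) * g := by simp only [mul_assoc]
  rw [hEprod, hE'prod]
  set E := W₁ * (A * (B * W₂)) with hEd
  set E' := W₁ * (A' * (B' * W₂)) with hE'd
  have h1 : g * (E * g') = E' := by
    rw [← mul_assoc, hkey, mul_assoc, hgg', mul_one]
  have h2 : (E * g') * g = E := by
    rw [mul_assoc, hg'g, mul_one]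
  have : E - E' = -(g * (E * g') - (E * g') * g) := by rw [h1, h2, neg_sub]
  rw [this]
  exact Submodule.neg_mem _ (Submodule.subset_span ⟨g, E * g', rfl⟩)

lemma perm_step {bl₁ bl₂ : List ℕ} (hperm : bl₁.Perm bl₂) :
    ∀ pre : List ℕ, (∀ x ∈ bl₁, 1 ≤ x) → (pre ++ bl₁).sum ≤ n →
    prodT (n := n) (natWord (pre ++ bl₁) 0)
      - prodT (natWord (pre ++ bl₂) 0) ∈ commSpan n := by
  induction hperm with
  | nil => intro pre _ _; simp
  | cons x h ih =>
    intro pre hpos hsum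
    rename_i l₁ l₂
    rw [show pre ++ x :: l₁ = (pre ++ [x]) ++ l₁ from (List.append_assoc pre [x] l₁).symm,
      show pre ++ x :: l₂ = (pre ++ [x]) ++ l₂ from (List.append_assoc pre [x] l₂).symm]
    apply ih
    · intro y hy; exact hpos y (List.mem_cons_of_mem x hy)
    · simpa using hsum
  | swap x y l =>
    intro pre hpos hsum
    exact swap_ctx pre l y x (hpos y (by simp)) (hpos x (by simp)) hsum
  | trans h₁ h₂ ih₁ ih₂ =>
    intro pre hpos hsum
    rename_i l₁ l₂ l₃ 
    have hpos₂ : ∀ x ∈ l₂, 1 ≤ x := fun x hx => hpos x (h₁.symm.subset hx)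
    have hsum₂ : (pre ++ l₂).sum ≤ n := by
      rw [List.sum_append] at hsum ⊢
      rw [← h₁.sum_eq]
      exact hsum
    have m₁ := ih₁ pre hpos hsum
    have m₂ := ih₂ pre hpos₂ hsum₂
    have := Submodule.add_mem _ m₁ m₂
    simpa using this

lemma Tw_eq_prodT (L : List (Fin (n - 1))) : Tw L = prodT (n := n) (L.map Fin.val) := by
  induction L with
  | nil => rfl
  | cons i L ih =>
    rw [List.map_cons, prodT_cons, ← ih]
    have hT : Tnat (n := n) i.1 = Tg i := by
      rw [Tnat, dif_pos i.2]
    rw [Tw, List.map_cons, List.prod_cons, ← Tw, hT]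

lemma mem_scanl_ge {c x : ℕ} {l : List ℕ} (h : x ∈ List.scanl (· + ·) c l) : c ≤ x := by
  induction l generalizing c with
  | nil => rw [List.scanl_nil, List.mem_singleton] at h; omega
  | cons a t ih =>
    rw [List.scanl_cons] at h
    rcases List.mem_cons.mp h with h | h
    · omega
    · have := ih h; omega

lemma self_mem_scanl (c : ℕ) (l : List ℕ) : c ∈ List.scanl (· + ·) c l := by
  cases l with
  | nil => rw [List.scanl_nil]; exact List.mem_singleton_self c
  | cons a t => rw [List.scanl_cons]; exact List.mem_append_left _ (List.mem_singleton_self c)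

lemma filter_scanl : ∀ (bl : List ℕ), (∀ x ∈ bl, 1 ≤ x) → ∀ p : ℕ,
    (List.range' p (bl.sum - 1)).filter
        (fun i => decide (i + 1 ∉ List.scanl (· + ·) p bl))
      = natWord bl p := by
  intro bl
  induction bl with
  | nil => intro _ p; rfl
  | cons a rest ih =>
    intro hpos p
    have ha : 1 ≤ a := hpos a (by simp)
    have hfilter1 : ∀ i ∈ List.range' p (a - 1),
        decide (i + 1 ∉ List.scanl (· + ·) p (a :: rest)) = true := by
      intro i hi
      rw [List.mem_range'_1] at hi
      rw [decide_eq_true_eq, List.scanl_cons]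
      intro hmem
      rcases List.mem_cons.mp hmem with h | h
      · omega
      · have := mem_scanl_ge h; omega
    rcases rest with _ | ⟨c, t⟩
    · -- bl = [a]
      show (List.range' p ([a].sum - 1)).filter _ = List.range' p (a - 1) ++ natWord [] (p + a)
      rw [show natWord [] (p + a) = [] from rfl, List.append_nil,
        show [a].sum - 1 = a - 1 by simp]
      exact List.filter_eq_self.mpr hfilter1
    · have hs1 : 1 ≤ (c :: t).sum := by
        have := hpos c (by simp)
        rw [List.sum_cons]
        omega
      have hsum_eq : (a :: c :: t).sum - 1 = (c :: t).sum + (a - 1) := by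
        rw [List.sum_cons]
        omega
      have hr : List.range' p ((a :: c :: t).sum - 1)
          = List.range' p (a - 1) ++ List.range' (p + (a - 1)) ((c :: t).sum) := by
        rw [hsum_eq, Nat.add_comm (c :: t).sum (a - 1), ← List.range'_append (step := 1), one_mul]
      rw [hr, List.filter_append, List.filter_eq_self.mpr hfilter1]
      have hr2 : List.range' (p + (a - 1)) ((c :: t).sum)
          = (p + (a - 1)) :: List.range' (p + a) ((c :: t).sum - 1) := by
        conv_lhs => rw [show (c :: t).sum = ((c :: t).sum - 1) + 1 by omega]
        rw [List.range'_succ, show p + (a - 1) + 1 = p + a by omega]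
      rw [hr2]
      rw [List.filter_cons_of_neg (by
        rw [Bool.not_eq_true, decide_eq_false_iff_not, Decidable.not_not,
          List.scanl_cons, show p + (a - 1) + 1 = p + a by omega]
        exact List.mem_cons_of_mem _ (self_mem_scanl (p + a) (c :: t)))]
      have hcongr : List.filter (fun i => decide (i + 1 ∉ List.scanl (· + ·) p (a :: c :: t)))
            (List.range' (p + a) ((c :: t).sum - 1))
          = List.filter (fun i => decide (i + 1 ∉ List.scanl (· + ·) (p + a) (c :: t)))
            (List.range' (p + a) ((c :: t).sum - 1)) := by
        apply List.filter_congr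
        intro i hi
        rw [List.mem_range'_1] at hi
        rw [List.scanl_cons]
        congr 1
        rw [eq_iff_iff]
        constructor
        · intro hmem h2
          exact hmem (List.mem_cons_of_mem _ h2)
        · intro hmem h2
          rcases List.mem_cons.mp h2 with h | h
          · omega
          · exact hmem h
      rw [hcongr, ih (fun x hx => hpos x (List.mem_cons_of_mem a hx)) (p + a)]
      rfl

lemma compWord_val (γ : Composition n) :
    (compWord γ).map Fin.val = natWord γ.blocks 0 := by
  have h1 : (compWord γ).map Fin.val
      = (List.range (n - 1)).filter
          (fun i => decide (i + 1 ∉ List.scanl (· + ·) 0 γ.blocks)) := by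
    rw [compWord, ← (show (List.finRange (n - 1)).map Fin.val = List.range (n - 1) from List.ext_getElem (by simp) (by simp)), List.filter_map]
    congr 1
  rw [h1]
  have h2 : List.range (n - 1) = List.range' 0 (γ.blocks.sum - 1) := by
    rw [γ.blocks_sum, List.range_eq_range']
  rw [h2]
  exact filter_scanl γ.blocks (fun x hx => γ.blocks_pos hx) 0

end S8
end Dev
/-- If `μ` is the partition obtained by rearranging the parts of a
composition `γ` of `n` in decreasing order, then `T_{w_γ} ≡ T_{w_μ} mod [HC_n, HC_n]`. -/
theorem statement_8 (n : ℕ) (hn : 1 ≤ n) (γ μ : Composition n)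
    (hperm : List.Perm μ.blocks γ.blocks) (hsort : μ.blocks.Pairwise (· ≥ ·)) :
    Twγ γ - Twγ μ ∈ commSpan n := by
  have key : ∀ δ : Composition n, Twγ δ = S8.prodT (natWord δ.blocks 0) := fun δ => by
    rw [Twγ, S8.Tw_eq_prodT, S8.compWord_val]
  rw [key γ, key μ]
  have h := S8.perm_step (n := n) hperm.symm []
    (fun x hx => γ.blocks_pos hx) (by simp [γ.blocks_sum])
  simpa using h

end
end
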